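/- For any database D, any estimates ŷ_T ∈ ℝ indexed by subsets T ⊆ [d], any S ⊆ [d] with |S| = k and β ∈ {−1,1}^S, setting z_{S,β} = Σ_{T ⊆ S} α_{S,β,T} · ŷ_T, one has |z_{S,β} − marg_{(S,β)}(D)|² ≤ 2^{−k} · Σ_{T ⊆ S} |ŷ_T − parity_T(D)|². -/

import Mathlib

open Finset

lemma swap_sum {A B : Type*} (D : Multiset A) (P : Finset B) (g : B → A → ℝ) :
    (D.map fun e => ∑ T ∈ P, g T e).sum = ∑ T ∈ P, (D.map (g T)).sum := by
  induction D using Multiset.induction with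
  | empty => simp
  | cons a s ih => simp [ih, Finset.sum_add_distrib]

theorem stmt_2 (d k : ℕ) (hd : 1 ≤ d) (hk : 1 ≤ k)
    (D : Multiset (Fin d → ℝ)) (hD : ∀ e ∈ D, ∀ i, e i = 1 ∨ e i = -1)
    (yhat : Finset (Fin d) → ℝ)
    (S : Finset (Fin d)) (hS : S.card = k)
    (β : Fin d → ℝ) (hβ : ∀ i ∈ S, β i = 1 ∨ β i = -1) :
    |(∑ T ∈ S.powerset, ((2 : ℝ) ^ (-(k : ℤ)) * ∏ i ∈ T, β i) * yhat T) -
        (D.map fun e => ∏ i ∈ S, (if e i = β i then (1 : ℝ) else 0)).sum| ^ 2 ≤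
      (2 : ℝ) ^ (-(k : ℤ)) *
        ∑ T ∈ S.powerset, |yhat T - (D.map fun e => ∏ i ∈ T, e i).sum| ^ 2 := by
  have h2 : (2 : ℝ) ^ (-(k : ℤ)) * 2 ^ k = 1 := by
    rw [← zpow_natCast (2:ℝ) k, ← zpow_add₀ (by norm_num : (2:ℝ) ≠ 0)]
    simp
  -- marginal decomposition
  have key : (D.map fun e => ∏ i ∈ S, (if e i = β i then (1 : ℝ) else 0)).sum
      = ∑ T ∈ S.powerset,
          ((2 : ℝ) ^ (-(k : ℤ)) * ∏ i ∈ T, β i) * (D.map fun e => ∏ i ∈ T, e i).sum := by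
    have hpt : ∀ e ∈ D, (∏ i ∈ S, (if e i = β i then (1 : ℝ) else 0))
        = ∑ T ∈ S.powerset, ((2 : ℝ) ^ (-(k : ℤ)) * ∏ i ∈ T, β i) * (∏ i ∈ T, e i) := by
      intro e he
      have h1 : ∀ i ∈ S, (if e i = β i then (1 : ℝ) else 0) = (β i * e i + 1) / 2 := by
        intro i hi
        rcases hD e he i with h | h <;> rcases hβ i hi with h' | h' <;>
          simp [h, h'] <;> norm_num
      rw [Finset.prod_congr rfl h1, Finset.prod_div_distrib, Finset.prod_const,
        Finset.prod_add, hS, div_eq_iff (by positivity : (2:ℝ)^k ≠ 0), Finset.sum_mul]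
      apply Finset.sum_congr rfl
      intro T hT
      rw [Finset.prod_const_one, Finset.prod_mul_distrib, mul_one]
      linear_combination (-((∏ i ∈ T, β i) * (∏ i ∈ T, e i))) * h2
    rw [Multiset.map_congr rfl hpt, swap_sum]
    exact Finset.sum_congr rfl fun T _ => by rw [← Multiset.sum_map_mul_left]
  rw [key, ← Finset.sum_sub_distrib]
  have hform : ∀ T ∈ S.powerset,
      ((2 : ℝ) ^ (-(k : ℤ)) * ∏ i ∈ T, β i) * yhat T -
        ((2 : ℝ) ^ (-(k : ℤ)) * ∏ i ∈ T, β i) * (D.map fun e => ∏ i ∈ T, e i).sum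
      = (2 : ℝ) ^ (-(k : ℤ)) * ((∏ i ∈ T, β i) * (yhat T - (D.map fun e => ∏ i ∈ T, e i).sum)) := by
    intro T hT; ring
  rw [Finset.sum_congr rfl hform, ← Finset.mul_sum, abs_mul, mul_pow, sq_abs]
  have hcs := sq_sum_le_card_mul_sum_sq
    (s := S.powerset) (f := fun T => (∏ i ∈ T, β i) * (yhat T - (D.map fun e => ∏ i ∈ T, e i).sum))
  have hsq : ∀ T ∈ S.powerset,
      ((∏ i ∈ T, β i) * (yhat T - (D.map fun e => ∏ i ∈ T, e i).sum)) ^ 2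
      = |yhat T - (D.map fun e => ∏ i ∈ T, e i).sum| ^ 2 := by
    intro T hT
    rw [mul_pow, sq_abs]
    have hb : (∏ i ∈ T, β i) ^ 2 = 1 := by
      rw [← Finset.prod_pow]
      exact Finset.prod_eq_one fun i hi => by
        rcases hβ i (Finset.mem_powerset.mp hT hi) with h | h <;> simp [h]
    rw [hb, one_mul]
  rw [Finset.sum_congr rfl hsq, Finset.card_powerset, hS] at hcs
  calc ((2:ℝ) ^ (-(k:ℤ))) ^ 2 *
        |∑ T ∈ S.powerset, (∏ i ∈ T, β i) * (yhat T - (D.map fun e => ∏ i ∈ T, e i).sum)| ^ 2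
      = ((2:ℝ) ^ (-(k:ℤ))) ^ 2 *
        (∑ T ∈ S.powerset, (∏ i ∈ T, β i) * (yhat T - (D.map fun e => ∏ i ∈ T, e i).sum)) ^ 2 := by
        rw [sq_abs]
    _ ≤ ((2:ℝ) ^ (-(k:ℤ))) ^ 2 * ((2^k : ℕ) * ∑ T ∈ S.powerset,
          |yhat T - (D.map fun e => ∏ i ∈ T, e i).sum| ^ 2) := by
        exact mul_le_mul_of_nonneg_left hcs (by positivity)
    _ = (2 : ℝ) ^ (-(k : ℤ)) * ∑ T ∈ S.powerset,
          |yhat T - (D.map fun e => ∏ i ∈ T, e i).sum| ^ 2 := by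
        have h3 : ((2:ℝ) ^ (-(k:ℤ))) ^ 2 * (2^k : ℕ) = (2:ℝ) ^ (-(k:ℤ)) := by
          push_cast
          nlinarith [h2, zpow_pos (by norm_num : (0:ℝ) < 2) (-(k:ℤ))]
        rw [← mul_assoc, h3]
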